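/- Let L be the symmetrically normalized Laplacian of a finite connected simple undirected graph on vertex set V, and let S ⊊ V be a nonempty proper subset. Then the principal submatrix L_{S^C, S^C} of L indexed by the complement of S is positive definite, hence invertible (so the Feature Propagation reconstruction operator is well defined). -/

import Mathlib

open Matrix

lemma sum_eq_sum_subtype_notin {N : ℕ} (S : Finset (Fin N)) (g : Fin N → ℝ)
    (hg : ∀ i ∈ S, g i = 0) :
    ∑ i, g i = ∑ i : {i : Fin N // i ∉ S}, g i.val := by
  rw [← Finset.sum_subtype Sᶜ (fun x => Finset.mem_compl) g]
  rw [← Finset.sum_subset (Finset.subset_univ Sᶜ)]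
  intro x _ hx
  exact hg x (by simpa using hx)

/-- For a finite connected simple undirected graph with N ≥ 2 vertices
(hence positive degrees) and a nonempty proper sample set S, the principal submatrix of the
symmetrically normalized Laplacian L = I - D^{-1/2} A D^{-1/2} indexed by the complement of S
is positive definite (hence invertible, so Feature Propagation is well defined). -/
theorem normalized_laplacian_principal_submatrix_posDef
    {N : ℕ} (hN : 2 ≤ N) (G : SimpleGraph (Fin N)) [DecidableRel G.Adj]
    (hconn : G.Connected) (hdeg : ∀ i, 0 < G.degree i)
    (A : Matrix (Fin N) (Fin N) ℝ) (hA : A = G.adjMatrix ℝ)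
    (Dinvhalf : Matrix (Fin N) (Fin N) ℝ)
    (hD : Dinvhalf = Matrix.diagonal fun i => (Real.sqrt (G.degree i))⁻¹)
    (L : Matrix (Fin N) (Fin N) ℝ) (hL : L = 1 - Dinvhalf * A * Dinvhalf)
    (S : Finset (Fin N)) (hS : S.Nonempty) (hS' : S ≠ Finset.univ) :
    (L.submatrix (Subtype.val : {i : Fin N // i ∉ S} → Fin N)
        (Subtype.val : {i : Fin N // i ∉ S} → Fin N)).PosDef := by
  have hsqrt : ∀ i, Real.sqrt (G.degree i) ≠ 0 := fun i =>
    ne_of_gt (Real.sqrt_pos.mpr (by exact_mod_cast hdeg i))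
  -- L = Dinvhalf * lapMatrix * Dinvhalf
  have hLlap : L = Dinvhalf * G.lapMatrix ℝ * Dinvhalf := by
    have hDD : Dinvhalf * G.degMatrix ℝ * Dinvhalf = 1 := by
      rw [hD, SimpleGraph.degMatrix, diagonal_mul_diagonal, diagonal_mul_diagonal]
      funext i j
      by_cases hij : i = j
      · subst hij
        have hm := Real.mul_self_sqrt (Nat.cast_nonneg (G.degree i) : (0:ℝ) ≤ _)
        have h := hsqrt i
        simp only [diagonal_apply_eq, Matrix.one_apply_eq]
        field_simp
        try linarith [hm]
      · simp [diagonal_apply_ne _ hij, Matrix.one_apply_ne hij]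
    rw [SimpleGraph.lapMatrix, hL, hA]
    rw [Matrix.mul_sub, Matrix.sub_mul, hDD]
  have hDsymm : Dinvhalfᵀ = Dinvhalf := by rw [hD, diagonal_transpose]
  have hLsymm : Lᵀ = L := by
    rw [hLlap, Matrix.transpose_mul, Matrix.transpose_mul, hDsymm,
      (G.isSymm_lapMatrix ℝ).eq, Matrix.mul_assoc]
  refine posDef_iff_dotProduct_mulVec.mpr ⟨?_, ?_⟩
  · rw [Matrix.IsHermitian, conjTranspose_eq_transpose_of_trivial, transpose_submatrix, hLsymm]
  · intro x hx
    rw [star_trivial]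
    -- extend x by zero
    set y : Fin N → ℝ := fun i => if h : i ∈ S then 0 else x ⟨i, h⟩ with hy
    have hyS : ∀ i ∈ S, y i = 0 := fun i hi => by simp [hy, hi]
    have hyval : ∀ i : {i : Fin N // i ∉ S}, y i.val = x i := fun i => by
      simp [hy, i.prop]
    -- quadratic form equality
    have hquad : x ⬝ᵥ ((L.submatrix Subtype.val Subtype.val) *ᵥ x) = y ⬝ᵥ (L *ᵥ y) := by
      simp only [dotProduct, mulVec, dotProduct, submatrix_apply]
      rw [sum_eq_sum_subtype_notin S _ (fun i hi => by rw [hyS i hi, zero_mul])]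
      refine Finset.sum_congr rfl fun i _ => ?_
      rw [hyval i]
      congr 1
      rw [sum_eq_sum_subtype_notin S _ (fun j hj => by rw [hyS j hj, mul_zero])]
      exact Finset.sum_congr rfl fun j _ => by rw [hyval j]
    set z : Fin N → ℝ := Dinvhalf *ᵥ y with hz
    have hform : y ⬝ᵥ (L *ᵥ y) = z ⬝ᵥ (G.lapMatrix ℝ *ᵥ z) := by
      rw [hLlap, Matrix.mul_assoc, ← mulVec_mulVec, ← mulVec_mulVec,
        Matrix.dotProduct_mulVec y Dinvhalf, ← hDsymm, vecMul_transpose, hDsymm]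
    have hpsd := (SimpleGraph.posSemidef_lapMatrix ℝ G).dotProduct_mulVec_nonneg z
    rw [star_trivial] at hpsd
    rw [hquad, hform]
    rcases lt_or_eq_of_le hpsd with h | h
    · exact h
    · exfalso
      -- z is constant by connectivity, and zero on S, hence zero
      have hz0 : ∀ i j, G.Reachable i j → z i = z j := by
        rw [← SimpleGraph.lapMatrix_toLinearMap₂'_apply'_eq_zero_iff_forall_reachable,
          toLinearMap₂'_apply']
        exact h.symm
      obtain ⟨s, hsS⟩ := hS
      have hzall : ∀ i, z i = 0 := by
        intro i
        have := hz0 i s (hconn.preconnected i s)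
        rw [this, hz, hD, mulVec_diagonal, hyS s hsS, mul_zero]
      apply hx
      funext i
      have hzi := hzall i.val
      rw [hz, hD, mulVec_diagonal] at hzi
      have hy0 : y i.val = 0 := by
        rcases mul_eq_zero.mp hzi with h' | h'
        · exact absurd h' (inv_ne_zero (hsqrt i.val))
        · exact h'
      rw [hyval i] at hy0
      exact hy0
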